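/- Let A be a partial pair which is not total and let U be a closed λ-term with ⟦U⟧^{G_Ā} ⊆ ⟦Ω⟧^{G_Ā} in the graph model G_Ā freely generated by A, where Ω = (λx.xx)(λx.xx). Then U is unsolvable. -/

import Mathlib

universe u v

/-- Untyped λ-terms in de Bruijn notation (over the countably infinite
supply of variables `ℕ`). -/
inductive Term : Type
  | var : ℕ → Term
  | app : Term → Term → Term
  | lam : Term → Term
  deriving DecidableEq

namespace Term

/-- Shift the free variables `≥ d` up by one. -/
def lift (d : ℕ) : Term → Term
  | var n => if n < d then var n else var (n + 1)
  | app M N => app (lift d M) (lift d N)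
  | lam M => lam (lift (d + 1) M)

/-- Capture-avoiding substitution of `N` for the free variable `k`. -/
def subst : Term → ℕ → Term → Term
  | var n, k, N => if n = k then N else if k < n then var (n - 1) else var n
  | app P Q, k, N => app (subst P k N) (subst Q k N)
  | lam P, k, N => lam (subst P (k + 1) (lift 0 N))

/-- One-step β-reduction. -/
inductive Step : Term → Term → Prop
  | beta (M N : Term) : Step (app (lam M) N) (subst M 0 N)
  | appL {M M' : Term} (N : Term) : Step M M' → Step (app M N) (app M' N)
  | appR (M : Term) {N N' : Term} : Step N N' → Step (app M N) (app M N')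
  | abs {M M' : Term} : Step M M' → Step (lam M) (lam M')

/-- β-conversion: the least equivalence relation containing one-step β-reduction. -/
inductive BetaConv : Term → Term → Prop
  | of {M N : Term} : Step M N → BetaConv M N
  | refl (M : Term) : BetaConv M M
  | symm {M N : Term} : BetaConv M N → BetaConv N M
  | trans {M N P : Term} : BetaConv M N → BetaConv N P → BetaConv M P

/-- All free variables are `< d`. -/
def BoundedBy : Term → ℕ → Prop
  | var n, d => n < d
  | app M N, d => BoundedBy M d ∧ BoundedBy N d
  | lam M, d => BoundedBy M (d + 1)

/-- Closed λ-terms. -/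
def Closed (M : Term) : Prop := BoundedBy M 0

/-- Terms of the form `y M₁ ⋯ Mₖ` (a variable applied to arguments). -/
inductive IsVarApp : Term → Prop
  | var (n : ℕ) : IsVarApp (var n)
  | app {M : Term} (N : Term) : IsVarApp M → IsVarApp (app M N)

/-- Head normal forms `λx₁…xₙ. y M₁ ⋯ Mₖ`. -/
inductive IsHnf : Term → Prop
  | head {M : Term} : IsVarApp M → IsHnf M
  | abs {M : Term} : IsHnf M → IsHnf (lam M)

/-- A λ-term is solvable if it is β-convertible to a head normal form. -/
def Solvable (M : Term) : Prop := ∃ N, BetaConv M N ∧ IsHnf N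

/-- Unsolvable λ-terms. -/
def Unsolvable (M : Term) : Prop := ¬ Solvable M

/-- β-normal forms: terms containing no β-redex. -/
def IsNormal : Term → Prop
  | var _ => True
  | lam M => IsNormal M
  | app M N => (∀ P, M ≠ lam P) ∧ IsNormal M ∧ IsNormal N

/-- A fixed effective bijective Gödel numbering of λ-terms. -/
def code : Term → ℕ
  | var n => 3 * n
  | app M N => 3 * Nat.pair (code M) (code N) + 1
  | lam M => 3 * code M + 2

/-- `δ = λx.xx`. -/
def delta : Term := lam (app (var 0) (var 0))

/-- `Ω = (λx.xx)(λx.xx)`. -/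
def Omega : Term := app delta delta

/-- `I = λx.x`. -/
def Idt : Term := lam (var 0)

end Term

open Term

/-- A set of λ-terms is r.e. if its set of Gödel codes is r.e. -/
def TermSetRe (V : Set Term) : Prop := REPred fun n : ℕ => ∃ M ∈ V, code M = n

/-- A set of λ-terms is co-r.e. if its set of Gödel codes is co-r.e.; since the
numbering is bijective this means that the code set of the complement is r.e. -/
def TermSetCoRe (V : Set Term) : Prop := TermSetRe Vᶜ

/-- β-co-r.e. sets: co-r.e. sets of λ-terms closed under β-conversion. -/
def BetaCoRe (V : Set Term) : Prop :=
  (∀ M N, M ∈ V → BetaConv M N → N ∈ V) ∧ TermSetCoRe V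

/-- A set of pairs of λ-terms is r.e. if the corresponding set of codes of
pairs is r.e. -/
def PairsRe (T : Set (Term × Term)) : Prop :=
  REPred fun n : ℕ => ∃ p ∈ T, Nat.pair (code p.1) (code p.2) = n

/-- λ-theories: congruences on Λ containing β-conversion. -/
def IsLambdaTheory (T : Term → Term → Prop) : Prop :=
  Equivalence T ∧
  (∀ M M' N N', T M M' → T N N' → T (Term.app M N) (Term.app M' N')) ∧
  (∀ M M', T M M' → T (Term.lam M) (Term.lam M')) ∧
  (∀ M N, BetaConv M N → T M N)

/-- Partial pairs (as raw data): a carrier set together with a partial map `j`,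
given as an `Option`-valued map on pairs of a subset and an element. -/
structure PrePair (α : Type u) : Type u where
  carrier : Set α
  j : Set α × α → Option α

namespace PrePair

variable {α : Type u}

/-- The defining conditions of a partial pair: the carrier is non-empty and `j`
is a partial injection `A* × A ⇀ A`. -/
def Valid (P : PrePair α) : Prop :=
  P.carrier.Nonempty ∧
  (∀ a x y, P.j (a, x) = some y →
      a.Finite ∧ a ⊆ P.carrier ∧ x ∈ P.carrier ∧ y ∈ P.carrier) ∧
  (∀ p q y, P.j p = some y → P.j q = some y → p = q)

/-- Total pairs: `j` is defined on every pair of a finite subset of the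
carrier and an element of the carrier. -/
def Total (P : PrePair α) : Prop :=
  ∀ a x, a.Finite → a ⊆ P.carrier → x ∈ P.carrier → ∃ y, P.j (a, x) = some y

/-- Webs of graph models: total pairs with infinite carrier. -/
def IsGraphModel (P : PrePair α) : Prop := P.Valid ∧ P.Total ∧ P.carrier.Infinite

/-- The subpair relation `A ⊑ B`. -/
def Subpair (P Q : PrePair α) : Prop :=
  P.carrier ⊆ Q.carrier ∧ ∀ p y, P.j p = some y → Q.j p = some y

end PrePair

/-- Consing a value onto an environment (de Bruijn style). -/
def envCons {α : Type u} (s : Set α) (ρ : ℕ → Set α) : ℕ → Set α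
  | 0 => s
  | n + 1 => ρ n

/-- The interpretation of a λ-term with respect to a partial pair and an
environment. -/
def interp {α : Type u} (P : PrePair α) : Term → (ℕ → Set α) → Set α
  | Term.var n, ρ => ρ n
  | Term.app M N, ρ =>
      {y | ∃ a : Set α, a.Finite ∧ a ⊆ interp P N ρ ∧
        ∃ z, P.j (a, y) = some z ∧ z ∈ interp P M ρ}
  | Term.lam M, ρ =>
      {y | ∃ (a : Set α) (x : α), a.Finite ∧ P.j (a, x) = some y ∧
        x ∈ interp P M (envCons a ρ)}

/-- The interpretation of a closed λ-term. -/
def interpC {α : Type u} (P : PrePair α) (M : Term) : Set α :=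
  interp P M fun _ => (∅ : Set α)

/-- The order theory of (the graph model generated by) a pair. -/
def ThLe {α : Type u} (P : PrePair α) : Set (Term × Term) :=
  {p | ∀ ρ : ℕ → Set α, (∀ n, ρ n ⊆ P.carrier) → interp P p.1 ρ ⊆ interp P p.2 ρ}

/-- The equational theory of (the graph model generated by) a pair. -/
def Th {α : Type u} (P : PrePair α) : Set (Term × Term) :=
  {p | ∀ ρ : ℕ → Set α, (∀ n, ρ n ⊆ P.carrier) → interp P p.1 ρ = interp P p.2 ρ}

/-- Morphisms of partial pairs. -/
def IsMorphism {α : Type u} {β : Type v} (P : PrePair α) (Q : PrePair β)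
    (f : α → β) : Prop :=
  Set.MapsTo f P.carrier Q.carrier ∧
  ∀ a x y, a ⊆ P.carrier → x ∈ P.carrier → P.j (a, x) = some y →
    Q.j (f '' a, f x) = some (f y)

/-- Isomorphisms of partial pairs: morphisms which are bijections between the
carriers and whose inverse is also a morphism. -/
def IsIso {α : Type u} {β : Type v} (P : PrePair α) (Q : PrePair β)
    (f : α → β) : Prop :=
  IsMorphism P Q f ∧
  ∃ g : β → α, IsMorphism Q P g ∧
    (∀ x ∈ P.carrier, g (f x) = x) ∧ ∀ y ∈ Q.carrier, f (g y) = y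

/-- The ambient type of the free completion: formal copies `base x` of the
original elements together with formal pairs `node`. -/
inductive FC (α : Type u) : Type u
  | base : α → FC α
  | node : List (FC α) → FC α → FC α

namespace FC

variable {α : Type u}

open scoped Classical

/-- A canonical list enumerating a finite set. -/
noncomputable def listOf (s : Set (FC α)) : List (FC α) :=
  if h : s.Finite then h.toFinset.toList else []

/-- The copy of the original carrier inside `FC α`. -/
def baseSet (P : PrePair α) : Set (FC α) := base '' P.carrier

/-- `(a, x)` is the copy of a pair in the domain of `j`. -/
def IsOldDom (P : PrePair α) (a : Set (FC α)) (x : FC α) : Prop :=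
  ∃ (a₀ : Set α) (x₀ : α), a = base '' a₀ ∧ x = base x₀ ∧ (P.j (a₀, x₀)).isSome

/-- The increasing stages `Aₙ` of the free completion:
`A₀ = A` and `A_{n+1} = A ∪ ((Aₙ* × Aₙ) ∖ dom j)`. -/
def stage (P : PrePair α) : ℕ → Set (FC α)
  | 0 => baseSet P
  | n + 1 => baseSet P ∪
      {t | ∃ (a : Set (FC α)) (x : FC α), a.Finite ∧ a ⊆ stage P n ∧
        x ∈ stage P n ∧ ¬ IsOldDom P a x ∧ t = node (listOf a) x}

/-- The carrier `Ā = ⋃ₙ Aₙ` of the free completion. -/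
def compCarrier (P : PrePair α) : Set (FC α) := ⋃ n, stage P n

/-- `y` is the copy of the old value `j (a₀, x₀)`, where `(a, x)` is the copy
of `(a₀, x₀) ∈ dom j`. -/
def OldVal (P : PrePair α) (a : Set (FC α)) (x y : FC α) : Prop :=
  ∃ (a₀ : Set α) (x₀ y₀ : α), a = base '' a₀ ∧ x = base x₀ ∧
    P.j (a₀, x₀) = some y₀ ∧ y = base y₀

/-- The total injection `j̄` of the free completion: it extends `j` and sends
every other pair `(a, α)` of the completion to (the formal copy of) itself. -/
noncomputable def jbar (P : PrePair α) (p : Set (FC α) × FC α) : Option (FC α) :=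
  if p.1.Finite ∧ p.1 ⊆ compCarrier P ∧ p.2 ∈ compCarrier P then
    if h : ∃ y, OldVal P p.1 p.2 y then some h.choose
    else some (node (listOf p.1) p.2)
  else none

end FC

/-- The free completion `Ā` of a partial pair `A`, as a total pair on `FC α`. -/
noncomputable def completion {α : Type u} (P : PrePair α) : PrePair (FC α) :=
  ⟨FC.compCarrier P, FC.jbar P⟩

/-- The fixed effective encoding of finite subsets of `ℕ`. -/
def encF (s : Finset ℕ) : ℕ := s.sum fun i => 2 ^ i

/-- A partial pair on `ℕ` whose carrier is a decidable set and whose map `j` is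
partial recursive with decidable domain (under the fixed effective encoding of
finite sets and pairs). -/
def ConcreteWE (Q : PrePair ℕ) : Prop :=
  ComputablePred (· ∈ Q.carrier) ∧
  ∃ f : ℕ →. ℕ, Nat.Partrec f ∧ ComputablePred (fun n => (f n).Dom) ∧
    ∀ (a : Finset ℕ) (x y : ℕ), Q.j (↑a, x) = some y ↔ y ∈ f (Nat.pair (encF a) x)

/-- The range of `j` is decidable. -/
def ConcreteRange (Q : PrePair ℕ) : Prop :=
  ComputablePred fun y => ∃ p, Q.j p = some y

/-- Weakly effective partial pairs: partial pairs isomorphic to a partial pair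
on `ℕ` with decidable carrier whose `j` is partial recursive with decidable
domain. -/
def WeaklyEffective {α : Type u} (P : PrePair α) : Prop :=
  ∃ Q : PrePair ℕ, ConcreteWE Q ∧ ∃ f : α → ℕ, IsIso P Q f

/-- Effective partial pairs: weakly effective via a pair whose `j` moreover has
decidable range. -/
def EffectivePair {α : Type u} (P : PrePair α) : Prop :=
  ∃ Q : PrePair ℕ, ConcreteWE Q ∧ ConcreteRange Q ∧ ∃ f : α → ℕ, IsIso P Q f

/-- Effective total pairs: total pairs isomorphic to some `(ℕ, ℓ)` with `ℓ`
total recursive, injective and with decidable range. -/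
def EffectiveTotalPair {α : Type u} (P : PrePair α) : Prop :=
  ∃ Q : PrePair ℕ, Q.carrier = Set.univ ∧
    (∃ f : ℕ → ℕ, Computable f ∧ Function.Injective f ∧
      ComputablePred (fun y => ∃ n, f n = y) ∧
      ∀ (a : Finset ℕ) (x : ℕ), Q.j (↑a, x) = some (f (Nat.pair (encF a) x))) ∧
    ∃ h : α → ℕ, IsIso P Q h

section AuxGeneral

variable {α : Type u}

theorem interp_mono (P : PrePair α) : ∀ (M : Term) (ρ ρ' : ℕ → Set α),
    (∀ n, ρ n ⊆ ρ' n) → interp P M ρ ⊆ interp P M ρ'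
  | Term.var n, ρ, ρ', h => h n
  | Term.app M N, ρ, ρ', h => by
      rintro y ⟨a, hfin, hsub, z, hj, hz⟩
      exact ⟨a, hfin, hsub.trans (interp_mono P N ρ ρ' h), z, hj,
        interp_mono P M ρ ρ' h hz⟩
  | Term.lam M, ρ, ρ', h => by
      rintro y ⟨a, x, hfin, hj, hx⟩
      refine ⟨a, x, hfin, hj, interp_mono P M _ _ ?_ hx⟩
      intro n
      cases n with
      | zero => exact subset_rfl
      | succ n => exact h n

theorem interp_agree (P : PrePair α) : ∀ (M : Term) (d : ℕ) (ρ ρ' : ℕ → Set α),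
    Term.BoundedBy M d → (∀ n, n < d → ρ n = ρ' n) → interp P M ρ = interp P M ρ'
  | Term.var n, d, ρ, ρ', hb, h => h n hb
  | Term.app M N, d, ρ, ρ', hb, h => by
      simp only [interp, interp_agree P M d ρ ρ' hb.1 h, interp_agree P N d ρ ρ' hb.2 h]
  | Term.lam M, d, ρ, ρ', hb, h => by
      simp only [interp]
      ext y
      constructor <;> rintro ⟨a, x, hfin, hj, hx⟩ <;> refine ⟨a, x, hfin, hj, ?_⟩
      · rw [← interp_agree P M (d+1) (envCons a ρ) (envCons a ρ') hb ?_]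
        · exact hx
        · intro n hn
          cases n with
          | zero => rfl
          | succ n => exact h n (by omega)
      · rw [interp_agree P M (d+1) (envCons a ρ) (envCons a ρ') hb ?_]
        · exact hx
        · intro n hn
          cases n with
          | zero => rfl
          | succ n => exact h n (by omega)

/-- Insert a set at position `k` of an environment. -/
def insEnv (k : ℕ) (s : Set α) (ρ : ℕ → Set α) : ℕ → Set α :=
  fun n => if n < k then ρ n else if n = k then s else ρ (n - 1)

theorem insEnv_zero (s : Set α) (ρ : ℕ → Set α) : insEnv 0 s ρ = envCons s ρ := by
  funext n
  cases n with
  | zero => rfl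
  | succ n => rfl

theorem envCons_insEnv (k : ℕ) (a s : Set α) (ρ : ℕ → Set α) :
    envCons a (insEnv k s ρ) = insEnv (k+1) s (envCons a ρ) := by
  funext n
  cases n with
  | zero => simp [envCons, insEnv]
  | succ m =>
      show insEnv k s ρ m = insEnv (k+1) s (envCons a ρ) (m+1)
      simp only [insEnv, Nat.add_lt_add_iff_right, Nat.add_right_cancel_iff,
        Nat.add_sub_cancel]
      split_ifs with h1 h2
      · rfl
      · rfl
      · obtain ⟨p, rfl⟩ : ∃ p, m = p + 1 := ⟨m - 1, by omega⟩
        rfl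

theorem interp_lift (P : PrePair α) : ∀ (N : Term) (d : ℕ) (s : Set α) (ρ : ℕ → Set α),
    interp P (Term.lift d N) (insEnv d s ρ) = interp P N ρ
  | Term.var n, d, s, ρ => by
      simp only [Term.lift]
      by_cases hn : n < d
      · rw [if_pos hn]
        simp only [interp, insEnv, if_pos hn]
      · rw [if_neg hn]
        simp only [interp, insEnv]
        rw [if_neg (by omega), if_neg (by omega)]
        simp
  | Term.app M N, d, s, ρ => by
      simp only [Term.lift, interp, interp_lift P M d s ρ, interp_lift P N d s ρ]
  | Term.lam M, d, s, ρ => by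
      simp only [Term.lift, interp]
      ext y
      constructor <;> rintro ⟨a, x, hfin, hj, hx⟩ <;> refine ⟨a, x, hfin, hj, ?_⟩
      · rwa [envCons_insEnv, interp_lift P M (d+1) s (envCons a ρ)] at hx
      · rwa [envCons_insEnv, interp_lift P M (d+1) s (envCons a ρ)]

theorem interp_lift_zero (P : PrePair α) (N : Term) (a : Set α) (ρ : ℕ → Set α) :
    interp P (Term.lift 0 N) (envCons a ρ) = interp P N ρ := by
  rw [← insEnv_zero]
  exact interp_lift P N 0 a ρ

theorem interp_subst (P : PrePair α) : ∀ (M : Term) (k : ℕ) (N : Term) (ρ : ℕ → Set α),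
    interp P (Term.subst M k N) ρ = interp P M (insEnv k (interp P N ρ) ρ)
  | Term.var n, k, N, ρ => by
      simp only [Term.subst]
      rcases lt_trichotomy n k with hn | rfl | hn
      · rw [if_neg (by omega), if_neg (by omega)]
        simp only [interp, insEnv, if_pos hn]
      · rw [if_pos rfl]
        simp [interp, insEnv]
      · rw [if_neg (by omega), if_pos hn]
        simp only [interp, insEnv]
        rw [if_neg (by omega), if_neg (by omega)]
  | Term.app M N', k, N, ρ => by
      simp only [Term.subst, interp, interp_subst P M k N ρ, interp_subst P N' k N ρ]
  | Term.lam M, k, N, ρ => by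
      simp only [Term.subst, interp]
      ext y
      constructor <;> rintro ⟨a, x, hfin, hj, hx⟩ <;> refine ⟨a, x, hfin, hj, ?_⟩
      · rw [interp_subst P M (k+1) (Term.lift 0 N) (envCons a ρ)] at hx
        rwa [interp_lift_zero, ← envCons_insEnv] at hx
      · rw [interp_subst P M (k+1) (Term.lift 0 N) (envCons a ρ),
          interp_lift_zero, ← envCons_insEnv]
        exact hx

theorem update_env_subset {ρ : ℕ → Set α} {i : ℕ} {a a' : Set α} (h : a ⊆ a') (n : ℕ) :
    Function.update ρ i a n ⊆ Function.update ρ i a' n := by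
  rcases eq_or_ne n i with rfl | hn
  · simpa using h
  · simp [Function.update_of_ne hn]

theorem interp_finite (P : PrePair α) : ∀ (M : Term) (ρ : ℕ → Set α) (i : ℕ) (x : α),
    x ∈ interp P M ρ →
    ∃ a : Set α, a.Finite ∧ a ⊆ ρ i ∧ x ∈ interp P M (Function.update ρ i a)
  | Term.var n, ρ, i, x => by
      intro hx
      rcases eq_or_ne n i with rfl | hn
      · exact ⟨{x}, Set.finite_singleton x, Set.singleton_subset_iff.2 hx, by simp [interp]⟩
      · exact ⟨∅, Set.finite_empty, Set.empty_subset _, by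
          simpa [interp, Function.update_of_ne hn] using hx⟩
  | Term.app M N, ρ, i, x => by
      rintro ⟨b, hbfin, hbsub, z, hj, hz⟩
      obtain ⟨a₁, ha₁f, ha₁s, hz'⟩ := interp_finite P M ρ i z hz
      have hwa : ∀ w : α, ∃ a : Set α, a.Finite ∧ a ⊆ ρ i ∧
          (w ∈ b → w ∈ interp P N (Function.update ρ i a)) := by
        intro w
        by_cases hw : w ∈ b
        · obtain ⟨a, h1, h2, h3⟩ := interp_finite P N ρ i w (hbsub hw)
          exact ⟨a, h1, h2, fun _ => h3⟩
        · exact ⟨∅, Set.finite_empty, Set.empty_subset _, fun hc => absurd hc hw⟩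
      choose f hf1 hf2 hf3 using hwa
      refine ⟨a₁ ∪ ⋃ w ∈ b, f w, ha₁f.union (hbfin.biUnion fun w _ => hf1 w),
        Set.union_subset ha₁s (Set.iUnion₂_subset fun w _ => hf2 w), ?_⟩
      refine ⟨b, hbfin, ?_, z, hj, ?_⟩
      · intro w hw
        refine interp_mono P N _ _ (fun n => update_env_subset ?_ n) (hf3 w hw)
        exact Set.subset_union_of_subset_right (Set.subset_biUnion_of_mem hw) _
      · exact interp_mono P M _ _ (fun n => update_env_subset Set.subset_union_left n) hz'
  | Term.lam M, ρ, i, x => by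
      rintro ⟨b, y, hbfin, hj, hy⟩
      obtain ⟨a, haf, has, hy'⟩ := interp_finite P M (envCons b ρ) (i+1) y hy
      refine ⟨a, haf, has, b, y, hbfin, hj, ?_⟩
      have hup : Function.update (envCons b ρ) (i+1) a = envCons b (Function.update ρ i a) := by
        funext n
        cases n with
        | zero => simp [envCons, Function.update]
        | succ m =>
            rcases eq_or_ne m i with rfl | hm
            · simp [envCons, Function.update]
            · simp [envCons, Function.update_of_ne hm,
                Function.update_of_ne (show m + 1 ≠ i + 1 by omega)]
      rwa [hup] at hy'

end AuxGeneral
section AuxCompletion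

variable {α : Type u}

open FC

theorem FC.base_injective : Function.Injective (FC.base : α → FC α) := by
  intro a b h
  injection h

theorem mem_listOf {s : Set (FC α)} (hs : s.Finite) {x : FC α} :
    x ∈ FC.listOf s ↔ x ∈ s := by
  rw [FC.listOf, dif_pos hs, Finset.mem_toList, Set.Finite.mem_toFinset]

theorem listOf_injOn {s t : Set (FC α)} (hs : s.Finite) (ht : t.Finite)
    (h : FC.listOf s = FC.listOf t) : s = t := by
  ext x
  rw [← mem_listOf hs, ← mem_listOf ht, h]

theorem exists_oldVal_iff (A : PrePair α) (a : Set (FC α)) (x : FC α) :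
    (∃ y, FC.OldVal A a x y) ↔ FC.IsOldDom A a x := by
  constructor
  · rintro ⟨y, a₀, x₀, y₀, rfl, rfl, hj, rfl⟩
    exact ⟨a₀, x₀, rfl, rfl, by rw [hj]; rfl⟩
  · rintro ⟨a₀, x₀, rfl, rfl, hs⟩
    obtain ⟨y₀, hy₀⟩ := Option.isSome_iff_exists.1 hs
    exact ⟨FC.base y₀, a₀, x₀, y₀, rfl, rfl, hy₀, rfl⟩

theorem jbar_cond {A : PrePair α} {a : Set (FC α)} {x y : FC α}
    (h : FC.jbar A (a, x) = some y) :
    a.Finite ∧ a ⊆ FC.compCarrier A ∧ x ∈ FC.compCarrier A := by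
  rw [FC.jbar] at h
  by_cases hc : a.Finite ∧ a ⊆ FC.compCarrier A ∧ x ∈ FC.compCarrier A
  · exact hc
  · rw [if_neg hc] at h
    exact absurd h (by simp)

theorem jbar_cases {A : PrePair α} {a : Set (FC α)} {x y : FC α}
    (h : FC.jbar A (a, x) = some y) :
    FC.OldVal A a x y ∨ (¬ FC.IsOldDom A a x ∧ y = FC.node (FC.listOf a) x) := by
  obtain ⟨h1, h2, h3⟩ := jbar_cond h
  rw [FC.jbar, if_pos ⟨h1, h2, h3⟩] at h
  by_cases ho : ∃ z, FC.OldVal A a x z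
  · rw [dif_pos ho] at h
    left
    obtain rfl : ho.choose = y := by injection h
    exact ho.choose_spec
  · rw [dif_neg ho] at h
    right
    refine ⟨(exists_oldVal_iff A a x).not.1 ho, ?_⟩
    injection h.symm

theorem jbar_total {A : PrePair α} {a : Set (FC α)} {x : FC α}
    (h1 : a.Finite) (h2 : a ⊆ FC.compCarrier A) (h3 : x ∈ FC.compCarrier A) :
    ∃ y, FC.jbar A (a, x) = some y := by
  rw [FC.jbar, if_pos (⟨h1, h2, h3⟩ : a.Finite ∧ _ ∧ _)]
  by_cases ho : ∃ z, FC.OldVal A a x z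
  · rw [dif_pos ho]; exact ⟨_, rfl⟩
  · rw [dif_neg ho]; exact ⟨_, rfl⟩

theorem stage_mono (A : PrePair α) : ∀ n, FC.stage A n ⊆ FC.stage A (n + 1) := by
  intro n
  induction n with
  | zero => exact Set.subset_union_left
  | succ n ih =>
      rintro t (ht | ⟨a, x, hf, ha, hx, hold, rfl⟩)
      · exact Or.inl ht
      · exact Or.inr ⟨a, x, hf, ha.trans ih, ih hx, hold, rfl⟩

theorem stage_le_mono (A : PrePair α) {m n : ℕ} (h : m ≤ n) :
    FC.stage A m ⊆ FC.stage A n := by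
  induction h with
  | refl => exact subset_rfl
  | step h ih => exact ih.trans (stage_mono A _)

theorem base_mem_compCarrier {A : PrePair α} {x : α} (hx : x ∈ A.carrier) :
    FC.base x ∈ FC.compCarrier A :=
  Set.mem_iUnion.2 ⟨0, ⟨x, hx, rfl⟩⟩

theorem finite_subset_stage {A : PrePair α} {a : Set (FC α)} (hfin : a.Finite)
    (h : a ⊆ FC.compCarrier A) : ∃ n, a ⊆ FC.stage A n := by
  revert h
  refine Set.Finite.induction_on (motive := fun s _ => s ⊆ FC.compCarrier A → ∃ n, s ⊆ FC.stage A n) a hfin (fun _ => ⟨0, Set.empty_subset _⟩) ?_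
  intro x s hx hs ih h
  obtain ⟨n, hn⟩ := ih (fun y hy => h (Set.mem_insert_of_mem _ hy))
  obtain ⟨m, hm⟩ := Set.mem_iUnion.1 (h (Set.mem_insert x s))
  exact ⟨max n m, Set.insert_subset (stage_le_mono A (le_max_right n m) hm)
    (hn.trans (stage_le_mono A (le_max_left n m)))⟩

theorem jbar_val_mem {A : PrePair α} (hA : A.Valid) {a : Set (FC α)} {x y : FC α}
    (h : FC.jbar A (a, x) = some y) : y ∈ FC.compCarrier A := by
  obtain ⟨h1, h2, h3⟩ := jbar_cond h
  rcases jbar_cases h with ⟨a₀, x₀, y₀, rfl, rfl, hj, rfl⟩ | ⟨hold, rfl⟩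
  · exact base_mem_compCarrier (hA.2.1 _ _ _ hj).2.2.2
  · obtain ⟨n, hn⟩ := finite_subset_stage h1 h2
    obtain ⟨m, hm⟩ := Set.mem_iUnion.1 h3
    refine Set.mem_iUnion.2 ⟨max n m + 1, Or.inr ⟨a, x, h1,
      hn.trans (stage_le_mono A (le_max_left n m)),
      stage_le_mono A (le_max_right n m) hm, hold, rfl⟩⟩

theorem jbar_inj {A : PrePair α} (hA : A.Valid) {p q : Set (FC α) × FC α} {y : FC α}
    (hp : FC.jbar A p = some y) (hq : FC.jbar A q = some y) : p = q := by
  obtain ⟨p1, p2⟩ := p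
  obtain ⟨q1, q2⟩ := q
  obtain ⟨hp1, _, _⟩ := jbar_cond hp
  obtain ⟨hq1, _, _⟩ := jbar_cond hq
  rcases jbar_cases hp with ⟨a₀, x₀, y₀, rfl, rfl, hj, rfl⟩ | ⟨_, rfl⟩
  · rcases jbar_cases hq with ⟨a₁, x₁, y₁, rfl, rfl, hj', hy⟩ | ⟨_, hy⟩
    · obtain rfl : y₁ = y₀ := FC.base_injective hy.symm
      have := hA.2.2 _ _ _ hj' hj
      obtain ⟨h1, h2⟩ := Prod.mk.injEq _ _ _ _ ▸ this
      rw [h1, h2]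
    · exact absurd hy (by simp)
  · rcases jbar_cases hq with ⟨a₁, x₁, y₁, rfl, rfl, hj', hy⟩ | ⟨_, hy⟩
    · exact absurd hy (by simp)
    · injection hy with hl hx
      rw [listOf_injOn hp1 hq1 hl, hx]

theorem interp_sub_carrier {A : PrePair α} (hA : A.Valid) :
    ∀ (M : Term) (ρ : ℕ → Set (FC α)), (∀ n, ρ n ⊆ FC.compCarrier A) →
      interp (completion A) M ρ ⊆ FC.compCarrier A
  | Term.var n, ρ, h => h n
  | Term.app M N, ρ, h => by
      rintro y ⟨a, hfin, hsub, z, hj, hz⟩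
      exact (jbar_cond hj).2.2
  | Term.lam M, ρ, h => by
      rintro y ⟨a, x, hfin, hj, hx⟩
      exact jbar_val_mem hA hj

end AuxCompletion
section AuxMain

variable {α : Type u}

theorem interp_beta {A : PrePair α} (hA : A.Valid) (M N : Term) (ρ : ℕ → Set (FC α))
    (hρ : ∀ n, ρ n ⊆ FC.compCarrier A) :
    interp (completion A) (Term.app (Term.lam M) N) ρ
      = interp (completion A) (Term.subst M 0 N) ρ := by
  rw [interp_subst, insEnv_zero]
  ext y
  constructor
  · rintro ⟨a, haf, hasub, z, hj, b, x, hbf, hj', hx⟩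
    have heq : (a, y) = (b, x) := jbar_inj hA hj hj'
    injection heq with h1 h2
    subst h1; subst h2
    refine interp_mono _ M _ _ (fun n => ?_) hx
    cases n with
    | zero => exact hasub
    | succ n => exact subset_rfl
  · intro hy
    obtain ⟨a, haf, hasub, hy'⟩ :=
      interp_finite (completion A) M (envCons (interp (completion A) N ρ) ρ) 0 y hy
    have hupd : Function.update (envCons (interp (completion A) N ρ) ρ) 0 a
        = envCons a ρ := by
      funext n
      cases n with
      | zero => rw [Function.update_self]; rfl
      | succ m => rw [Function.update_of_ne (Nat.succ_ne_zero m)]; rfl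
    rw [hupd] at hy'
    have hsubN : interp (completion A) N ρ ⊆ FC.compCarrier A :=
      interp_sub_carrier hA N ρ hρ
    have hacar : a ⊆ FC.compCarrier A := hasub.trans hsubN
    have henv : ∀ n, envCons a ρ n ⊆ FC.compCarrier A := by
      intro n
      cases n with
      | zero => exact hacar
      | succ n => exact hρ n
    have hycar : y ∈ FC.compCarrier A := interp_sub_carrier hA M (envCons a ρ) henv hy'
    obtain ⟨z, hz⟩ := jbar_total haf hacar hycar
    exact ⟨a, haf, hasub, z, hz, a, y, haf, hz, hy'⟩

theorem step_sound {A : PrePair α} (hA : A.Valid) {M N : Term} (h : Term.Step M N) :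
    ∀ ρ : ℕ → Set (FC α), (∀ n, ρ n ⊆ FC.compCarrier A) →
      interp (completion A) M ρ = interp (completion A) N ρ := by
  induction h with
  | beta M N => exact fun ρ hρ => interp_beta hA M N ρ hρ
  | appL N _ ih => intro ρ hρ; simp only [interp, ih ρ hρ]
  | appR M _ ih => intro ρ hρ; simp only [interp, ih ρ hρ]
  | abs _ ih =>
      intro ρ hρ
      simp only [interp]
      ext y
      have henv : ∀ a : Set (FC α), a ⊆ FC.compCarrier A →
          ∀ n, envCons a ρ n ⊆ FC.compCarrier A := by
        intro a ha n
        cases n with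
        | zero => exact ha
        | succ n => exact hρ n
      constructor <;> rintro ⟨a, x, haf, hj, hx⟩ <;> refine ⟨a, x, haf, hj, ?_⟩
      · rw [← ih (envCons a ρ) (henv a (jbar_cond hj).2.1)]
        exact hx
      · rw [ih (envCons a ρ) (henv a (jbar_cond hj).2.1)]
        exact hx

theorem conv_sound {A : PrePair α} (hA : A.Valid) {M N : Term} (h : Term.BetaConv M N) :
    ∀ ρ : ℕ → Set (FC α), (∀ n, ρ n ⊆ FC.compCarrier A) →
      interp (completion A) M ρ = interp (completion A) N ρ := by
  induction h with
  | of hs => exact step_sound hA hs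
  | refl M => exact fun ρ _ => rfl
  | symm _ ih => exact fun ρ hρ => (ih ρ hρ).symm
  | trans _ _ ih1 ih2 => exact fun ρ hρ => (ih1 ρ hρ).trans (ih2 ρ hρ)

theorem mem_delta {A : PrePair α} {ρ : ℕ → Set (FC α)} {y : FC α} :
    y ∈ interp (completion A) Term.delta ρ ↔
    ∃ (a : Set (FC α)) (x : FC α), a.Finite ∧ FC.jbar A (a, x) = some y ∧
      ∃ e : Set (FC α), e.Finite ∧ e ⊆ a ∧
        ∃ z, FC.jbar A (e, x) = some z ∧ z ∈ a :=
  Iff.rfl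

theorem delta_aux {A : PrePair α} (hA : A.Valid) :
    ∀ (n : ℕ) (y : FC α), sizeOf y ≤ n →
      y ∈ interpC (completion A) Term.delta →
      ∀ (e : Set (FC α)) (β : FC α), e ⊆ interpC (completion A) Term.delta →
        FC.jbar A (e, β) = some y → ∃ b, β = FC.base b := by
  intro n
  induction n using Nat.strong_induction_on with
  | _ n ih =>
    intro y hsz hy e β he hj
    obtain ⟨a, x, haf, hj', e', hef, hesub, z, hjz, hz⟩ := mem_delta.1 hy
    have heq : (e, β) = (a, x) := jbar_inj hA hj hj'
    injection heq with h1 h2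
    subst h1; subst h2
    rcases jbar_cases hj with ⟨a₀, x₀, y₀, ha, hb, _, _⟩ | ⟨_, hynode⟩
    · exact ⟨x₀, hb⟩
    · subst hynode
      have hz' : z ∈ FC.listOf e := (mem_listOf (jbar_cond hj).1).2 hz
      have hlt := List.sizeOf_lt_of_mem hz'
      have hzsize : sizeOf z < sizeOf (FC.node (FC.listOf e) β) := by
        simp only [FC.node.sizeOf_spec]
        omega
      exact ih (sizeOf z) (by omega) z le_rfl (he hz) e' β (hesub.trans he) hjz

theorem omega_base {A : PrePair α} (hA : A.Valid) :
    ∀ β ∈ interpC (completion A) Term.Omega, ∃ b, β = FC.base b := by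
  intro β hβ
  obtain ⟨c, hcf, hcsub, z, hj, hz⟩ : ∃ c : Set (FC α), c.Finite ∧
      c ⊆ interpC (completion A) Term.delta ∧
      ∃ z, FC.jbar A (c, β) = some z ∧ z ∈ interpC (completion A) Term.delta := hβ
  exact delta_aux hA (sizeOf z) z le_rfl hz c β hcsub hj

theorem varapp_aux {A : PrePair α} (hA : A.Valid) :
    ∀ (M : Term), Term.IsVarApp M → ∀ t : FC α, t ∈ FC.compCarrier A →
    ∃ c ∈ FC.compCarrier A, ∃ i : ℕ,
      ∀ ρ : ℕ → Set (FC α), c ∈ ρ i → t ∈ interp (completion A) M ρ := by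
  intro M hM
  induction hM with
  | var n => exact fun t ht => ⟨t, ht, n, fun ρ hc => hc⟩
  | app N _ ih =>
      intro t ht
      obtain ⟨z, hz⟩ := jbar_total Set.finite_empty (Set.empty_subset _) ht
      obtain ⟨c, hc, i, hmem⟩ := ih z (jbar_val_mem hA hz)
      exact ⟨c, hc, i, fun ρ hcρ =>
        ⟨∅, Set.finite_empty, Set.empty_subset _, z, hz, hmem ρ hcρ⟩⟩

theorem hnf_aux {A : PrePair α} (hA : A.Valid) :
    ∀ (N : Term), Term.IsHnf N → ∀ t : FC α, t ∈ FC.compCarrier A →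
    (∀ b, t ≠ FC.base b) →
    ∃ c ∈ FC.compCarrier A, ∃ t' : FC α, t' ∈ FC.compCarrier A ∧
      (∀ b, t' ≠ FC.base b) ∧
      t' ∈ interp (completion A) N (fun _ => ({c} : Set (FC α))) := by
  intro N hN
  induction hN with
  | head hM =>
      intro t ht hnb
      obtain ⟨c, hc, i, hmem⟩ := varapp_aux hA _ hM t ht
      exact ⟨c, hc, t, ht, hnb, hmem _ rfl⟩
  | abs _ ih =>
      intro t ht hnb
      obtain ⟨c, hc, t', ht', hnb', hmem⟩ := ih t ht hnb
      obtain ⟨t'', hj⟩ := jbar_total (Set.finite_singleton c)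
        (Set.singleton_subset_iff.2 hc) ht'
      have hnb'' : ∀ b, t'' ≠ FC.base b := by
        rcases jbar_cases hj with ⟨a₀, x₀, y₀, _, hxe, _, _⟩ | ⟨_, hnode⟩
        · exact absurd hxe (hnb' x₀)
        · subst hnode; intro b; simp
      refine ⟨c, hc, t'', jbar_val_mem hA hj, hnb'', ⟨{c}, t', Set.finite_singleton c, hj, ?_⟩⟩
      have henv : envCons {c} (fun _ => ({c} : Set (FC α))) = fun _ => ({c} : Set (FC α)) := by
        funext n
        cases n <;> rfl
      rwa [henv]

end AuxMain
/-- If `A` is a non-total partial pair and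
`⟦U⟧ ⊆ ⟦Ω⟧` in the graph model freely generated by `A` for a closed term `U`,
then `U` is unsolvable. -/
theorem unsolvable_of_le_omega {α : Type u} (A : PrePair α) (hA : A.Valid)
    (hnt : ¬ A.Total) (U : Term) (hU : Term.Closed U)
    (h : interpC (completion A) U ⊆ interpC (completion A) Term.Omega) :
    Term.Unsolvable U := by
  intro hs
  obtain ⟨N, hconv, hhnf⟩ := hs
  rw [PrePair.Total] at hnt
  push_neg at hnt
  obtain ⟨a₀, x₀, ha₀f, ha₀s, hx₀, hnone⟩ := hnt
  have hnone' : A.j (a₀, x₀) = none := by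
    cases hv : A.j (a₀, x₀) with
    | none => rfl
    | some y => exact absurd hv (hnone y)
  have hbs : FC.base '' a₀ ⊆ FC.compCarrier A := by
    rintro _ ⟨w, hw, rfl⟩
    exact base_mem_compCarrier (ha₀s hw)
  obtain ⟨γ, hγ⟩ := jbar_total (ha₀f.image FC.base) hbs (base_mem_compCarrier hx₀)
  have hγnb : ∀ b, γ ≠ FC.base b := by
    rcases jbar_cases hγ with ⟨a₁, x₁, y₁, hae, hxe, hj1, hyb⟩ | ⟨_, hnode⟩
    · obtain rfl : a₁ = a₀ := (Set.image_injective.2 FC.base_injective hae).symm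
      obtain rfl : x₁ = x₀ := (FC.base_injective hxe).symm
      rw [hnone'] at hj1
      exact absurd hj1 (by simp)
    · subst hnode
      intro b
      simp
  obtain ⟨c, hc, t', ht', hnb', hmem⟩ := hnf_aux hA N hhnf γ (jbar_val_mem hA hγ) hγnb
  have hρ : ∀ n, (fun _ : ℕ => ({c} : Set (FC α))) n ⊆ FC.compCarrier A :=
    fun _ => Set.singleton_subset_iff.2 hc
  have hUN := conv_sound hA hconv (fun _ : ℕ => ({c} : Set (FC α))) hρ
  have hU' : interp (completion A) U (fun _ : ℕ => ({c} : Set (FC α)))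
      = interpC (completion A) U :=
    interp_agree _ U 0 _ _ hU (fun n hn => absurd hn (Nat.not_lt_zero n))
  have ht'' : t' ∈ interpC (completion A) U := by
    rw [← hU', hUN]
    exact hmem
  obtain ⟨b, hb⟩ := omega_base hA t' (h ht'')
  exact hnb' b hb
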